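/- arXiv:1807.10727 — 5 statements merged into one kernel-verified Lean document; each statement's English description precedes it below -/
import Mathlib

section
/- Let G be a finite simple graph on a vertex set V of size n in which every vertex has at least one neighbor, and let ρ be chosen uniformly at random among bijections V → {1,…,n}. Then the expected number of distinct labels, i.e. E[|{ℓ_ρ(v) : v ∈ V}|], is at most 3n/4. -/
open Function SimpleGraph

/-- The closed neighborhood of `v` in `G`: `v` together with its neighbors. -/
def closedNbhd {V : Type*} (G : SimpleGraph V) (v : V) : Set V :=
  {u | u = v ∨ G.Adj v u}

/-- `N(N(v))`: the union of the closed neighborhoods of the vertices of the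
closed neighborhood of `v`. -/
def twoNbhd {V : Type*} (G : SimpleGraph V) (v : V) : Set V :=
  ⋃ u ∈ closedNbhd G v, closedNbhd G u

section Aux

variable {V : Type*} [Fintype V] [DecidableEq V] {n : ℕ}

/-- The closed neighborhood as a finset. -/
noncomputable def ncFinset (G : SimpleGraph V) (x : V) : Finset V :=
  (Set.toFinite (closedNbhd G x)).toFinset

lemma mem_ncFinset {G : SimpleGraph V} {x y : V} :
    y ∈ ncFinset G x ↔ (y = x ∨ G.Adj x y) := by
  rw [ncFinset, Set.Finite.mem_toFinset]
  exact Iff.rfl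

lemma self_mem_ncFinset {G : SimpleGraph V} {x : V} : x ∈ ncFinset G x :=
  mem_ncFinset.2 (Or.inl rfl)

lemma ncFinset_nonempty {G : SimpleGraph V} (x : V) : (ncFinset G x).Nonempty :=
  ⟨x, self_mem_ncFinset⟩

/-- The vertex of the closed neighborhood of `x` minimizing `ρ`. -/
noncomputable def gmin (G : SimpleGraph V) (ρ : V ≃ Fin n) (x : V) : V :=
  ρ.symm (((ncFinset G x).image ρ).min'
    (Finset.Nonempty.image (ncFinset_nonempty x) ρ))

lemma gmin_mem {G : SimpleGraph V} (ρ : V ≃ Fin n) (x : V) :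
    gmin G ρ x ∈ ncFinset G x := by
  have h := Finset.min'_mem ((ncFinset G x).image ρ)
    (Finset.Nonempty.image (ncFinset_nonempty x) ρ)
  rw [Finset.mem_image] at h
  obtain ⟨y, hy, hρy⟩ := h
  have : gmin G ρ x = y := by
    rw [gmin, ← hρy, Equiv.symm_apply_apply]
  rwa [this]

lemma gmin_le {G : SimpleGraph V} (ρ : V ≃ Fin n) (x : V) :
    ∀ y ∈ ncFinset G x, ρ (gmin G ρ x) ≤ ρ y := by
  intro y hy
  have h1 : ρ (gmin G ρ x) = ((ncFinset G x).image ρ).min'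
      (Finset.Nonempty.image (ncFinset_nonempty x) ρ) := by
    rw [gmin, Equiv.apply_symm_apply]
  rw [h1]
  exact Finset.min'_le _ _ (Finset.mem_image_of_mem ρ hy)

/-- Counting lemma: for distinct `w u`, at most half the bijections have `ρ w < ρ u`. -/
lemma count_lt (w u : V) (hne : w ≠ u) :
    2 * (Finset.univ.filter (fun ρ : V ≃ Fin n => ρ w < ρ u)).card
      ≤ Fintype.card (V ≃ Fin n) := by
  classical
  set L := Finset.univ.filter (fun ρ : V ≃ Fin n => ρ w < ρ u) with hL
  set R := Finset.univ.filter (fun ρ : V ≃ Fin n => ρ u < ρ w) with hR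
  have hdisj : Disjoint L R := by
    rw [Finset.disjoint_left]
    intro ρ hρL hρR
    rw [hL, Finset.mem_filter] at hρL
    rw [hR, Finset.mem_filter] at hρR
    exact absurd hρR.2 (not_lt.2 hρL.2.le)
  have hcard : L.card = R.card := by
    apply Finset.card_bij' (fun ρ _ => (Equiv.swap w u).trans ρ)
      (fun ρ _ => (Equiv.swap w u).trans ρ)
    · intro ρ hρ
      rw [hL, Finset.mem_filter] at hρ
      rw [hR, Finset.mem_filter]
      refine ⟨Finset.mem_univ _, ?_⟩
      simpa [Equiv.trans_apply] using hρ.2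
    · intro ρ hρ
      rw [hR, Finset.mem_filter] at hρ
      rw [hL, Finset.mem_filter]
      refine ⟨Finset.mem_univ _, ?_⟩
      simpa [Equiv.trans_apply] using hρ.2
    · intro ρ _
      ext v
      simp [Equiv.trans_apply]
    · intro ρ _
      ext v
      simp [Equiv.trans_apply]
  calc 2 * L.card = L.card + R.card := by omega
    _ = (L ∪ R).card := (Finset.card_union_of_disjoint hdisj).symm
    _ ≤ Fintype.card (V ≃ Fin n) := Finset.card_le_univ _

/-- Counting lemma: the probability that `a` is first and `w` second among a set `S`
is `1/(|S|(|S|-1))`. Stated multiplicatively. -/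
lemma count_first_two (S : Finset V) (a w : V) (ha : a ∈ S) (hw : w ∈ S) (hne : a ≠ w) :
    S.card * (S.card - 1) *
      (Finset.univ.filter (fun ρ : V ≃ Fin n =>
        ρ a < ρ w ∧ ∀ y ∈ S, y ≠ a → y ≠ w → ρ w < ρ y)).card
      ≤ Fintype.card (V ≃ Fin n) := by
  classical
  set E := Finset.univ.filter (fun ρ : V ≃ Fin n =>
      ρ a < ρ w ∧ ∀ y ∈ S, y ≠ a → y ≠ w → ρ w < ρ y) with hE
  -- permutation sending p.1 to a and p.2 to w, preserving S
  set π : V × V → Equiv.Perm V := fun p =>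
    (Equiv.swap a p.1).trans (Equiv.swap ((Equiv.swap a p.1) p.2) w) with hπ
  have hkey : ∀ p : V × V, p.1 ≠ p.2 → a ≠ (Equiv.swap a p.1) p.2 := by
    intro p hp h
    have h2 := congrArg (Equiv.swap a p.1) h
    rw [Equiv.swap_apply_left, Equiv.swap_apply_self] at h2
    exact hp h2
  have hπ1 : ∀ p : V × V, p.1 ≠ p.2 → π p p.1 = a := by
    intro p hp
    rw [hπ]
    simp only [Equiv.trans_apply, Equiv.swap_apply_left, Equiv.swap_apply_right]
    exact Equiv.swap_apply_of_ne_of_ne (hkey p hp) hne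
  have hπ2 : ∀ p : V × V, π p p.2 = w := by
    intro p
    rw [hπ]
    simp only [Equiv.trans_apply, Equiv.swap_apply_left]
  have swap_mem : ∀ (b c y : V), b ∈ S → c ∈ S → y ∈ S → (Equiv.swap b c) y ∈ S := by
    intro b c y hb hc hy
    rcases eq_or_ne y b with h | h1
    · rw [h, Equiv.swap_apply_left]; exact hc
    · rcases eq_or_ne y c with h | h2
      · rw [h, Equiv.swap_apply_right]; exact hb
      · rw [Equiv.swap_apply_of_ne_of_ne h1 h2]; exact hy
  have hπS : ∀ p : V × V, p.1 ∈ S → p.2 ∈ S → ∀ y ∈ S, π p y ∈ S := by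
    intro p h1 h2 y hy
    rw [hπ]
    simp only [Equiv.trans_apply]
    exact swap_mem _ _ _ (swap_mem a p.1 p.2 ha h1 h2) hw (swap_mem a p.1 y ha h1 hy)
  -- membership fact
  have hmem : ∀ p ∈ S.offDiag, ∀ ρ ∈ E,
      ((π p).trans ρ) p.1 < ((π p).trans ρ) p.2 ∧
      ∀ y ∈ S, y ≠ p.1 → y ≠ p.2 → ((π p).trans ρ) p.2 < ((π p).trans ρ) y := by
    intro p hp ρ hρ
    rw [Finset.mem_offDiag] at hp
    obtain ⟨hp1, hp2, hp12⟩ := hp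
    rw [hE, Finset.mem_filter] at hρ
    obtain ⟨-, hρ1, hρ2⟩ := hρ
    constructor
    · simp only [Equiv.trans_apply]
      rw [hπ1 p hp12, hπ2 p]
      exact hρ1
    · intro y hy hy1 hy2
      simp only [Equiv.trans_apply]
      rw [hπ2 p]
      apply hρ2
      · exact hπS p hp1 hp2 y hy
      · intro h
        have : π p y = π p p.1 := by rw [h, hπ1 p hp12]
        exact hy1 ((π p).injective this)
      · intro h
        have : π p y = π p p.2 := by rw [h, hπ2 p]
        exact hy2 ((π p).injective this)
  -- the map (p, ρ) ↦ (π p).trans ρ is injective on offDiag ×ˢ E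
  have hinj : Set.InjOn (fun q : (V × V) × (V ≃ Fin n) => (π q.1).trans q.2)
      ↑(S.offDiag ×ˢ E) := by
    intro q1 hq1 q2 hq2 heq
    simp only [Finset.coe_product, Set.mem_prod, Finset.mem_coe] at hq1 hq2
    obtain ⟨hp1, hρ1⟩ := hq1
    obtain ⟨hp2, hρ2⟩ := hq2
    have m1 := hmem q1.1 hp1 q1.2 hρ1
    have m2 := hmem q2.1 hp2 q2.2 hρ2
    simp only at heq
    rw [heq] at m1
    -- from m1 and m2 : q1.1 = q2.1
    rw [Finset.mem_offDiag] at hp1 hp2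
    obtain ⟨h11, h12, h1ne⟩ := hp1
    obtain ⟨h21, h22, h2ne⟩ := hp2
    set σ := (π q2.1).trans q2.2 with hσ
    -- c := q1.1.1 is the strict min of σ on S, similarly q2.1.1
    have min1 : ∀ y ∈ S, y ≠ q1.1.1 → σ q1.1.1 < σ y := by
      intro y hy hyne
      rcases eq_or_ne y q1.1.2 with rfl | hy2
      · exact m1.1
      · exact m1.1.trans (m1.2 y hy hyne hy2)
    have min2 : ∀ y ∈ S, y ≠ q2.1.1 → σ q2.1.1 < σ y := by
      intro y hy hyne
      rcases eq_or_ne y q2.1.2 with rfl | hy2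
      · exact m2.1
      · exact m2.1.trans (m2.2 y hy hyne hy2)
    have hc : q1.1.1 = q2.1.1 := by
      by_contra hcc
      exact absurd (min2 q1.1.1 h11 hcc) (not_lt.2 (min1 q2.1.1 h21 (Ne.symm hcc)).le)
    have hd : q1.1.2 = q2.1.2 := by
      by_contra hdd
      have l1 : σ q1.1.2 < σ q2.1.2 :=
        m1.2 q2.1.2 h22 (by rw [hc]; exact Ne.symm h2ne) (Ne.symm hdd)
      have l2 : σ q2.1.2 < σ q1.1.2 :=
        m2.2 q1.1.2 h12 (by rw [← hc]; exact Ne.symm h1ne) hdd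
      exact absurd l1 (not_lt.2 l2.le)
    have hpp : q1.1 = q2.1 := Prod.ext hc hd
    have hρρ : q1.2 = q2.2 := by
      rw [hpp] at heq
      exact Equiv.ext fun v => by
        have h3 := congrArg (fun e : V ≃ Fin n => e ((π q2.1).symm v)) heq
        simpa [hσ, Equiv.trans_apply, Equiv.apply_symm_apply] using h3
    exact Prod.ext hpp hρρ
  have hcards : (S.offDiag ×ˢ E).card ≤ Fintype.card (V ≃ Fin n) := by
    have := Finset.card_le_card_of_injOn
      (fun q : (V × V) × (V ≃ Fin n) => (π q.1).trans q.2)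
      (fun q _ => Finset.mem_univ _) hinj
    simpa using this
  rw [Finset.card_product, Finset.offDiag_card] at hcards
  calc S.card * (S.card - 1) * E.card = (S.card * S.card - S.card) * E.card := by
        congr 1
        rw [← Nat.pred_eq_sub_one, Nat.mul_pred]
    _ ≤ Fintype.card (V ≃ Fin n) := hcards

end Aux

/-- If every vertex of a finite simple graph `G` on `n` vertices has a
neighbor, and `ρ` is a uniformly random bijection `V → {1,…,n}`, then the expected number
of distinct labels `ℓ_ρ(v)` (where `ℓ_ρ(v)` is the vertex of `N(N(v))` minimizing `ρ`)
is at most `3n/4`. -/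
theorem stmt0 {V : Type*} [Fintype V] [DecidableEq V] (G : SimpleGraph V)
    (n : ℕ) (hn : Fintype.card V = n)
    (hdeg : ∀ v : V, ∃ u, G.Adj v u)
    (ℓ : (V ≃ Fin n) → V → V)
    (hℓ : ∀ (ρ : V ≃ Fin n) (v : V),
      ℓ ρ v ∈ twoNbhd G v ∧ ∀ u ∈ twoNbhd G v, ρ (ℓ ρ v) ≤ ρ u) :
    (∑ ρ : V ≃ Fin n, ((Finset.univ.image (ℓ ρ)).card : ℝ)) /
      (Fintype.card (V ≃ Fin n) : ℝ) ≤ 3 * n / 4 := by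
  classical
  choose φ hφ using hdeg
  have hφne : ∀ v, v ≠ φ v := fun v => (hφ v).ne
  have hφmem : ∀ v, φ v ∈ ncFinset G v := fun v => mem_ncFinset.2 (Or.inr (hφ v))
  have hNE : Nonempty (V ≃ Fin n) := ⟨Fintype.equivFinOfCardEq hn⟩
  have hN : 0 < Fintype.card (V ≃ Fin n) := Fintype.card_pos
  set N := Fintype.card (V ≃ Fin n) with hNdef
  -- the bad predicate
  set D : (V ≃ Fin n) → V → Prop := fun ρ x =>
    gmin G ρ x ≠ x ∧ φ (gmin G ρ x) ∉ ncFinset G x ∧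
      ρ (φ (gmin G ρ x)) < ρ (gmin G ρ x) with hD
  -- subset of twoNbhd facts
  have hsub : ∀ (u v : V), u ∈ closedNbhd G v →
      ∀ y ∈ ncFinset G u, (y : V) ∈ twoNbhd G v := by
    intro u v hu y hy
    exact Set.mem_biUnion hu (mem_ncFinset.1 hy)
  -- Step P1: the labels are among the closed-neighborhood minimizers
  have himl : ∀ ρ : V ≃ Fin n,
      (Finset.univ.image (ℓ ρ)).card ≤ (Finset.univ.image (gmin G ρ)).card := by
    intro ρ
    apply Finset.card_le_card
    intro w hw
    rw [Finset.mem_image] at hw ⊢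
    obtain ⟨v, -, rfl⟩ := hw
    obtain ⟨hmem, hmin⟩ := hℓ ρ v
    rw [twoNbhd, Set.mem_iUnion₂] at hmem
    obtain ⟨u, hu, hℓu⟩ := hmem
    refine ⟨u, Finset.mem_univ u, ?_⟩
    have h1 : ℓ ρ v ∈ ncFinset G u := mem_ncFinset.2 hℓu
    have h2 : ρ (gmin G ρ u) ≤ ρ (ℓ ρ v) := gmin_le ρ u _ h1
    have h3 : ρ (ℓ ρ v) ≤ ρ (gmin G ρ u) := hmin _ (hsub u v hu _ (gmin_mem ρ u))
    exact ρ.injective (le_antisymm h2 h3)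
  -- A and B counts
  set A : (V ≃ Fin n) → ℕ :=
    fun ρ => (Finset.univ.filter (fun w => ρ w < ρ (φ w))).card with hA
  set B : (V ≃ Fin n) → ℕ :=
    fun ρ => (Finset.univ.filter (fun x => D ρ x)).card with hB
  -- Step P2: split the image according to whether w beats φ w
  have hsplit : ∀ ρ : V ≃ Fin n, (Finset.univ.image (gmin G ρ)).card ≤ A ρ + B ρ := by
    intro ρ
    set I := Finset.univ.image (gmin G ρ) with hI
    have h0 : (I.filter (fun w => ρ w < ρ (φ w))).card
        + (I.filter (fun w => ¬ (ρ w < ρ (φ w)))).card = I.card :=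
      Finset.card_filter_add_card_filter_not _
    have h1 : (I.filter (fun w => ρ w < ρ (φ w))).card ≤ A ρ :=
      Finset.card_le_card (fun w hw => by
        rw [Finset.mem_filter] at hw
        exact Finset.mem_filter.2 ⟨Finset.mem_univ _, hw.2⟩)
    have h2 : (I.filter (fun w => ¬ (ρ w < ρ (φ w)))).card ≤ B ρ := by
      have hsub2 : I.filter (fun w => ¬ (ρ w < ρ (φ w)))
          ⊆ (Finset.univ.filter (fun x => D ρ x)).image (gmin G ρ) := by
        intro w hw
        rw [Finset.mem_filter] at hw
        obtain ⟨hwI, hnl⟩ := hw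
        rw [hI, Finset.mem_image] at hwI
        obtain ⟨x₀, -, hx₀⟩ := hwI
        have hwφ : ρ (φ w) < ρ w :=
          lt_of_le_of_ne (not_lt.1 hnl) (fun h => hφne w ((ρ.injective h).symm))
        have hDx : D ρ x₀ := by
          refine ⟨?_, ?_, ?_⟩
          · rw [hx₀]
            intro h
            have hmem2 : φ w ∈ ncFinset G x₀ := by rw [h]; rw [h] at hx₀; rw [← hx₀]; exact hφmem _
            have := gmin_le ρ x₀ (φ w) hmem2
            rw [hx₀] at this
            exact absurd hwφ (not_lt.2 this)
          · rw [hx₀]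
            intro hmem2
            have := gmin_le ρ x₀ (φ w) hmem2
            rw [hx₀] at this
            exact absurd hwφ (not_lt.2 this)
          · rw [hx₀]; exact hwφ
        rw [Finset.mem_image]
        exact ⟨x₀, Finset.mem_filter.2 ⟨Finset.mem_univ _, hDx⟩, hx₀⟩
      calc (I.filter (fun w => ¬ (ρ w < ρ (φ w)))).card
          ≤ ((Finset.univ.filter (fun x => D ρ x)).image (gmin G ρ)).card :=
            Finset.card_le_card hsub2
        _ ≤ B ρ := Finset.card_image_le
    omega
  -- Step P3: the A-sum
  have hAsum : 2 * ∑ ρ : V ≃ Fin n, A ρ ≤ n * N := by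
    have h1 : ∑ ρ : V ≃ Fin n, A ρ
        = ∑ w : V, (Finset.univ.filter (fun ρ : V ≃ Fin n => ρ w < ρ (φ w))).card := by
      simp only [hA, Finset.card_filter]
      exact Finset.sum_comm
    rw [h1, Finset.mul_sum]
    calc ∑ w : V, 2 * (Finset.univ.filter (fun ρ : V ≃ Fin n => ρ w < ρ (φ w))).card
        ≤ ∑ _w : V, N := Finset.sum_le_sum (fun w _ => count_lt w (φ w) (hφne w))
      _ = n * N := by rw [Finset.sum_const, Finset.card_univ, hn, smul_eq_mul]
  -- Step P4: the B-sum, via the per-vertex bound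
  have hBx : ∀ x : V, 4 * (Finset.univ.filter (fun ρ : V ≃ Fin n => D ρ x)).card ≤ N := by
    intro x
    set k := (ncFinset G x).card with hk
    have hk1 : 1 ≤ k := Finset.card_pos.2 (ncFinset_nonempty x)
    set Dx := Finset.univ.filter (fun ρ : V ≃ Fin n => D ρ x) with hDxdef
    have hcov : Dx ⊆ ((ncFinset G x).erase x).biUnion
        (fun w => Finset.univ.filter (fun ρ : V ≃ Fin n => gmin G ρ x = w ∧ D ρ x)) := by
      intro ρ hρ
      rw [hDxdef, Finset.mem_filter] at hρ
      have hD' := hρ.2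
      rw [Finset.mem_biUnion]
      exact ⟨gmin G ρ x, Finset.mem_erase.2 ⟨hD'.1, gmin_mem ρ x⟩,
        Finset.mem_filter.2 ⟨Finset.mem_univ _, rfl, hD'⟩⟩
    have hcard1 : Dx.card ≤ ∑ w ∈ (ncFinset G x).erase x,
        (Finset.univ.filter (fun ρ : V ≃ Fin n => gmin G ρ x = w ∧ D ρ x)).card :=
      le_trans (Finset.card_le_card hcov) Finset.card_biUnion_le
    have hper : ∀ w ∈ (ncFinset G x).erase x,
        (k+1) * k * (Finset.univ.filter
          (fun ρ : V ≃ Fin n => gmin G ρ x = w ∧ D ρ x)).card ≤ N := by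
      intro w hwmem
      obtain ⟨hwx, hwN⟩ := Finset.mem_erase.1 hwmem
      by_cases hφw : φ w ∈ ncFinset G x
      · have hemp : (Finset.univ.filter
            (fun ρ : V ≃ Fin n => gmin G ρ x = w ∧ D ρ x)) = ∅ := by
          rw [Finset.eq_empty_iff_forall_notMem]
          intro ρ hρ
          rw [Finset.mem_filter] at hρ
          obtain ⟨-, hg, hDρ⟩ := hρ
          exact hDρ.2.1 (by rw [hg]; exact hφw)
        rw [hemp]
        simp only [Finset.card_empty, Nat.mul_zero]
        exact Nat.zero_le _
      · set S := insert (φ w) (ncFinset G x) with hS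
        have hScard : S.card = k + 1 := by
          rw [hS, Finset.card_insert_of_notMem hφw]
        have haS : φ w ∈ S := Finset.mem_insert_self _ _
        have hwS : w ∈ S := Finset.mem_insert_of_mem hwN
        have hne2 : φ w ≠ w := Ne.symm (hφne w)
        have hcnt := count_first_two (n := n) S (φ w) w haS hwS hne2
        rw [hScard] at hcnt
        have hsub3 : (Finset.univ.filter
              (fun ρ : V ≃ Fin n => gmin G ρ x = w ∧ D ρ x))
            ⊆ (Finset.univ.filter (fun ρ : V ≃ Fin n =>
                ρ (φ w) < ρ w ∧ ∀ y ∈ S, y ≠ φ w → y ≠ w → ρ w < ρ y)) := by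
          intro ρ hρ
          rw [Finset.mem_filter] at hρ ⊢
          obtain ⟨hu, hg, hDρ⟩ := hρ
          refine ⟨hu, ?_, ?_⟩
          · have := hDρ.2.2
            rwa [hg] at this
          · intro y hyS hya hyw
            have hyN : y ∈ ncFinset G x := by
              rcases Finset.mem_insert.1 hyS with h | h
              · exact absurd h hya
              · exact h
            have hle := gmin_le ρ x y hyN
            rw [hg] at hle
            exact lt_of_le_of_ne hle (fun h => hyw ((ρ.injective h).symm))
        calc (k+1) * k * (Finset.univ.filter
              (fun ρ : V ≃ Fin n => gmin G ρ x = w ∧ D ρ x)).card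
            ≤ (k+1) * k * (Finset.univ.filter (fun ρ : V ≃ Fin n =>
                ρ (φ w) < ρ w ∧ ∀ y ∈ S, y ≠ φ w → y ≠ w → ρ w < ρ y)).card :=
              Nat.mul_le_mul_left _ (Finset.card_le_card hsub3)
          _ = (k+1) * ((k+1) - 1) * (Finset.univ.filter (fun ρ : V ≃ Fin n =>
                ρ (φ w) < ρ w ∧ ∀ y ∈ S, y ≠ φ w → y ≠ w → ρ w < ρ y)).card := by
              norm_num
          _ ≤ N := hcnt
    have hsum : (k+1) * k * Dx.card ≤ (k-1) * N := by
      calc (k+1) * k * Dx.card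
          ≤ (k+1) * k * ∑ w ∈ (ncFinset G x).erase x,
            (Finset.univ.filter (fun ρ : V ≃ Fin n => gmin G ρ x = w ∧ D ρ x)).card :=
            Nat.mul_le_mul_left _ hcard1
        _ = ∑ w ∈ (ncFinset G x).erase x, (k+1) * k *
            (Finset.univ.filter (fun ρ : V ≃ Fin n => gmin G ρ x = w ∧ D ρ x)).card :=
            Finset.mul_sum _ _ _
        _ ≤ ∑ _w ∈ (ncFinset G x).erase x, N := Finset.sum_le_sum hper
        _ = (k-1) * N := by
            rw [Finset.sum_const, Finset.card_erase_of_mem self_mem_ncFinset, smul_eq_mul]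
    have h4k : 4 * (k-1) ≤ (k+1) * k := by
      obtain ⟨m, hm⟩ := Nat.exists_eq_add_of_le hk1
      rw [hm]
      simp only [Nat.add_sub_cancel_left]
      rcases m with _ | j
      · simp
      · nlinarith []
    have hfin : (k+1) * k * (4 * Dx.card) ≤ (k+1) * k * N := by
      calc (k+1) * k * (4 * Dx.card) = 4 * ((k+1) * k * Dx.card) := by ring
        _ ≤ 4 * ((k-1) * N) := Nat.mul_le_mul_left _ hsum
        _ = (4 * (k-1)) * N := by ring
        _ ≤ ((k+1) * k) * N := Nat.mul_le_mul_right _ h4k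
    exact Nat.le_of_mul_le_mul_left hfin (Nat.mul_pos (Nat.succ_pos k) hk1)
  have hBsum : 4 * ∑ ρ : V ≃ Fin n, B ρ ≤ n * N := by
    have h1 : ∑ ρ : V ≃ Fin n, B ρ
        = ∑ x : V, (Finset.univ.filter (fun ρ : V ≃ Fin n => D ρ x)).card := by
      simp only [hB, Finset.card_filter]
      exact Finset.sum_comm
    rw [h1, Finset.mul_sum]
    calc ∑ x : V, 4 * (Finset.univ.filter (fun ρ : V ≃ Fin n => D ρ x)).card
        ≤ ∑ _x : V, N := Finset.sum_le_sum (fun x _ => hBx x)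
      _ = n * N := by rw [Finset.sum_const, Finset.card_univ, hn, smul_eq_mul]
  -- Step P5: assemble
  have hkey : 4 * ∑ ρ : V ≃ Fin n, (Finset.univ.image (ℓ ρ)).card ≤ 3 * (n * N) := by
    have h1 : ∑ ρ : V ≃ Fin n, (Finset.univ.image (ℓ ρ)).card
        ≤ (∑ ρ : V ≃ Fin n, A ρ) + ∑ ρ : V ≃ Fin n, B ρ := by
      rw [← Finset.sum_add_distrib]
      exact Finset.sum_le_sum (fun ρ _ => le_trans (himl ρ) (hsplit ρ))
    linarith [hAsum, hBsum, h1]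
  -- convert to the real statement
  have hcast : (∑ ρ : V ≃ Fin n, ((Finset.univ.image (ℓ ρ)).card : ℝ))
      = ((∑ ρ : V ≃ Fin n, (Finset.univ.image (ℓ ρ)).card : ℕ) : ℝ) := by
    push_cast
    rfl
  rw [hcast, div_le_div_iff₀ (by exact_mod_cast hN) (by norm_num : (0:ℝ) < 4)]
  have h2 : ((4 * ∑ ρ : V ≃ Fin n, (Finset.univ.image (ℓ ρ)).card : ℕ) : ℝ)
      ≤ ((3 * (n * N) : ℕ) : ℝ) := by exact_mod_cast hkey
  push_cast at h2
  linarith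
end

section
/- Let G be a finite simple graph on a vertex set V of size n in which every vertex has at least one neighbor, and let ρ : V → ℕ be injective. Then for every vertex v ∈ V there exists a nonnegative integer d(v) such that for every i ≥ d(v), f_ρ^{i}(v) = f_ρ^{i+2}(v), where f_ρ^{i} denotes the i-th iterate of f_ρ. -/
open Function SimpleGraph

/-- Let `G` be a finite simple graph on `n` vertices in which every
vertex has a neighbor, let `ρ : V → ℕ` be injective, and let `f v` be the neighbor of `v`
minimizing `ρ`.  Then for every vertex `v` there is a nonnegative integer `d` such that
`f^[i] v = f^[i+2] v` for all `i ≥ d`. -/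
theorem stmt2 {V : Type*} [Fintype V] (G : SimpleGraph V)
    (n : ℕ) (hn : Fintype.card V = n)
    (hdeg : ∀ v : V, ∃ u, G.Adj v u)
    (ρ : V → ℕ) (hρ : Function.Injective ρ)
    (f : V → V)
    (hf : ∀ v : V, G.Adj v (f v) ∧ ∀ u, G.Adj v u → ρ (f v) ≤ ρ u) :
    ∀ v : V, ∃ d : ℕ, ∀ i ≥ d, f^[i] v = f^[i + 2] v := by
  intro v
  have key : ∀ w : V, ρ (f (f w)) ≤ ρ w := fun w => (hf (f w)).2 w (hf w).1.symm
  set a : ℕ → ℕ := fun k => ρ (f^[2 * k] v) with ha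
  have hiter : ∀ k, f^[2 * (k + 1)] v = f (f (f^[2 * k] v)) := by
    intro k
    have : 2 * (k + 1) = 2 + 2 * k := by ring
    rw [this, Function.iterate_add_apply]
    simp [Function.iterate_succ_apply']
  obtain ⟨m, ⟨k0, hk0⟩, hmin⟩ :=
    Nat.lt_wfRel.wf.has_min (Set.range a) ⟨a 0, ⟨0, rfl⟩⟩
  have h1 : a (k0 + 1) ≤ a k0 := by
    show ρ (f^[2 * (k0 + 1)] v) ≤ ρ (f^[2 * k0] v)
    rw [hiter]; exact key _
  have h2 : ¬ a (k0 + 1) < m := hmin _ ⟨k0 + 1, rfl⟩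
  have heq : a (k0 + 1) = a k0 := le_antisymm h1 (by omega)
  have hfix : f^[2 * k0] v = f^[2 * (k0 + 1)] v := (hρ heq).symm
  refine ⟨2 * k0, fun i hi => ?_⟩
  obtain ⟨j, rfl⟩ : ∃ j, i = j + 2 * k0 := ⟨i - 2 * k0, by omega⟩
  have h3 : j + 2 * k0 + 2 = j + 2 * (k0 + 1) := by ring
  rw [h3, Function.iterate_add_apply, Function.iterate_add_apply, ← hfix]
end

section
/- Let G be a finite simple graph on a vertex set V of size n in which every vertex has at least one neighbor, and let ρ : V → ℕ be injective. Then two vertices u and w belong to the same connected component of the undirected functional graph H if and only if {f_ρ^{d(u)}(u), f_ρ^{d(u)+1}(u)} = {f_ρ^{d(w)}(w), f_ρ^{d(w)+1}(w)} as sets. -/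
open Function SimpleGraph

/-- Let `G` be a finite simple graph in which every vertex has a
neighbor, `ρ : V → ℕ` injective, `f v` the neighbor of `v` minimizing `ρ`, and `d v`
the least `d` with `f^[d+2] v = f^[d] v`.  Two vertices `u, w` lie in the same connected
component of the undirected functional graph `H` (edge set `{{v, f v}}`) if and only if
`{f^[d u] u, f^[d u + 1] u} = {f^[d w] w, f^[d w + 1] w}` as sets. -/
theorem stmt5 {V : Type*} [Fintype V] (G : SimpleGraph V)
    (n : ℕ) (hn : Fintype.card V = n)
    (hdeg : ∀ v : V, ∃ u, G.Adj v u)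
    (ρ : V → ℕ) (hρ : Function.Injective ρ)
    (f : V → V)
    (hf : ∀ v : V, G.Adj v (f v) ∧ ∀ u, G.Adj v u → ρ (f v) ≤ ρ u)
    (d : V → ℕ)
    (hd : ∀ v : V, f^[d v + 2] v = f^[d v] v ∧
      ∀ e : ℕ, f^[e + 2] v = f^[e] v → d v ≤ e) :
    ∀ u w : V,
      (SimpleGraph.fromRel fun a b => f a = b).Reachable u w ↔
        ({f^[d u] u, f^[d u + 1] u} : Set V) = {f^[d w] w, f^[d w + 1] w} := by
  have hne : ∀ v : V, v ≠ f v := fun v => ((hf v).1).ne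
  -- periodicity beyond d v
  have hper : ∀ v k, d v ≤ k → f^[k + 2] v = f^[k] v := by
    intro v k hk
    obtain ⟨m, rfl⟩ := Nat.exists_eq_add_of_le hk
    have h : d v + m + 2 = m + (d v + 2) := by omega
    rw [h, Function.iterate_add_apply, (hd v).1, ← Function.iterate_add_apply,
      Nat.add_comm]
  -- the cycle pair is the same for all k ≥ d v
  have hcyc : ∀ v k, d v ≤ k →
      ({f^[k] v, f^[k + 1] v} : Set V) = {f^[d v] v, f^[d v + 1] v} := by
    intro v k hk
    induction k, hk using Nat.le_induction with
    | base => rfl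
    | succ k hk ih =>
      rw [← ih]
      show ({f^[k + 1] v, f^[k + 2] v} : Set V) = _
      rw [hper v k hk]
      exact Set.pair_comm _ _
  -- one step of f preserves the cycle pair
  have hstep : ∀ v : V,
      ({f^[d (f v)] (f v), f^[d (f v) + 1] (f v)} : Set V)
        = {f^[d v] v, f^[d v + 1] v} := by
    intro v
    have h1 : ∀ m : ℕ, f^[m] (f v) = f^[m + 1] v := by
      intro m; rw [← Function.iterate_succ_apply]
    have hle : d v ≤ d (f v) + 1 := by
      apply (hd v).2
      have : d (f v) + 1 + 2 = d (f v) + 2 + 1 := by omega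
      rw [this, Function.iterate_succ_apply, (hd (f v)).1,
        ← Function.iterate_succ_apply]
    rw [h1, h1]
    exact hcyc v (d (f v) + 1) hle
  set H := SimpleGraph.fromRel fun a b : V => f a = b with hH
  have hadj : ∀ x : V, H.Adj x (f x) := by
    intro x
    rw [hH, SimpleGraph.fromRel_adj]
    exact ⟨hne x, Or.inl rfl⟩
  have hHreach : ∀ (v : V) (k : ℕ), H.Reachable v (f^[k] v) := by
    intro v k
    induction k with
    | zero => exact SimpleGraph.Reachable.refl v
    | succ k ih =>
      rw [Function.iterate_succ_apply']
      exact ih.trans (hadj _).reachable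
  intro u w
  constructor
  · rintro ⟨p⟩
    induction p with
    | nil => rfl
    | cons h p ih =>
      rename_i a b c'
      refine Eq.trans ?_ ih
      rw [hH, SimpleGraph.fromRel_adj] at h
      rcases h.2 with h' | h'
      · rw [← h']; exact (hstep a).symm
      · rw [← h']; exact hstep b
  · intro hset
    have h1 := hHreach u (d u)
    have hm : f^[d u] u ∈ ({f^[d w] w, f^[d w + 1] w} : Set V) := by
      rw [← hset]; exact Set.mem_insert _ _
    simp only [Set.mem_insert_iff, Set.mem_singleton_iff] at hm
    rcases hm with hm | hm
    · exact h1.trans (by rw [hm]; exact (hHreach w (d w)).symm)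
    · exact h1.trans (by rw [hm]; exact (hHreach w (d w + 1)).symm)
end

section
/- Let P_n be the path graph on vertices v_1, …, v_n (with v_i adjacent to v_{i+1} for 1 ≤ i < n) and let ρ be any injective function from its vertex set to ℕ. Then the number of distinct labels, |{ℓ_ρ(v) : v ∈ V(P_n)}|, is at least n/5. Consequently, one contraction phase of LocalContraction shortens a path by a factor of at most 5. -/
open Function SimpleGraph

/-- Let `P_n` be the path graph on `n` vertices, `ρ` an injective
function from its vertices to `ℕ`, and `ℓ v` the vertex of `N(N(v))` minimizing `ρ`.
Then the number of distinct labels is at least `n/5` (so one contraction phase of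
LocalContraction shortens a path by a factor of at most 5). -/
theorem stmt12 (n : ℕ) (ρ : Fin n → ℕ) (hρ : Function.Injective ρ)
    (ℓ : Fin n → Fin n)
    (hℓ : ∀ v : Fin n, ℓ v ∈ twoNbhd (pathGraph n) v ∧
      ∀ u ∈ twoNbhd (pathGraph n) v, ρ (ℓ v) ≤ ρ u) :
    (n : ℝ) / 5 ≤ ((Finset.univ.image ℓ).card : ℝ) := by
  have hclosed : ∀ u v : Fin n, u ∈ closedNbhd (pathGraph n) v →
      u.val ≤ v.val + 1 ∧ v.val ≤ u.val + 1 := by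
    intro u v h
    rcases h with h | h
    · subst h; omega
    · rw [pathGraph_adj] at h; omega
  have key : ∀ v : Fin n, (v : ℕ) ≤ (ℓ v : ℕ) + 2 ∧ (ℓ v : ℕ) ≤ (v : ℕ) + 2 := by
    intro v
    obtain ⟨hmem, -⟩ := hℓ v
    simp only [twoNbhd, Set.mem_iUnion] at hmem
    obtain ⟨u, hu, hlu⟩ := hmem
    have h1 := hclosed u v hu
    have h2 := hclosed (ℓ v) u hlu
    omega
  have h5 : (Finset.univ : Finset (Fin n)).card ≤ 5 * (Finset.univ.image ℓ).card := by
    apply Finset.card_le_mul_card_image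
    intro w _
    have hsub : ((Finset.univ : Finset (Fin n)).filter fun v => ℓ v = w).card ≤
        (Finset.Icc (w.val - 2) (w.val + 2)).card := by
      apply Finset.card_le_card_of_injOn (fun v => v.val)
      · intro v hv
        simp only [Finset.mem_coe, Finset.mem_filter] at hv
        have := key v
        rw [hv.2] at this
        simp only [Finset.mem_coe, Finset.mem_Icc]
        omega
      · intro a _ b _ hab
        exact Fin.ext hab
    have : (Finset.Icc (w.val - 2) (w.val + 2)).card ≤ 5 := by
      rw [Nat.card_Icc]; omega
    omega
  rw [Finset.card_univ, Fintype.card_fin] at h5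
  rw [div_le_iff₀ (by norm_num : (0:ℝ) < 5)]
  have h5' : (n : ℝ) ≤ 5 * ((Finset.univ.image ℓ).card : ℝ) := by exact_mod_cast h5
  linarith
end

section
/- There exist a constant c > 0 and a threshold n₀ such that for every n ≥ n₀ the following holds. Let P_n be the path graph on n vertices and let ρ be chosen uniformly at random among bijections from its vertex set to {1,…,n}. Then with probability at least 1 − e^{−c·n}, the undirected functional graph H of f_ρ (with edge set {{v, f_ρ(v)} : v ∈ V}) has at least n/26 connected components. Consequently, TreeContraction requires Ω(log n) phases on a path of length n with high probability. -/
open Function SimpleGraph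

namespace Stmt14aux


def U6 (a b c d e f : ℕ) : Prop :=
  (a < c ∧ d < b) ∨ (b < d ∧ e < c) ∨ (c < e ∧ f < d)

def D6 (a b c d e f : ℕ) : Prop :=
  U6 a b c d e f ∧ (¬ U6 d e f a b c ∨ a < d)

instance (a b c d e f : ℕ) : Decidable (U6 a b c d e f) := by unfold U6; infer_instance
instance (a b c d e f : ℕ) : Decidable (D6 a b c d e f) := by unfold D6; infer_instance

lemma D6_U6 {a b c d e f : ℕ} (h : D6 a b c d e f) : U6 a b c d e f := h.1

lemma flip6 {a b c d e f : ℕ} (h1 : a ≠ b) (h2 : a ≠ c) (h3 : a ≠ d) (h4 : a ≠ e)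
    (h5 : a ≠ f) (h6 : b ≠ c) (h7 : b ≠ d) (h8 : b ≠ e) (h9 : b ≠ f) (h10 : c ≠ d)
    (h11 : c ≠ e) (h12 : c ≠ f) (h13 : d ≠ e) (h14 : d ≠ f) (h15 : e ≠ f) :
    D6 d e f a b c ↔ ¬ D6 a b c d e f := by
  unfold D6 U6
  omega



def pv (n : ℕ) (ρ : Equiv.Perm (Fin n)) (i : ℕ) : ℕ :=
  if h : i < n then (ρ ⟨i, h⟩).val else n + i

lemma pv_lt {n : ℕ} (ρ : Equiv.Perm (Fin n)) {i : ℕ} (h : i < n) :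
    pv n ρ i = (ρ ⟨i, h⟩).val := dif_pos h

lemma pv_inj {n : ℕ} (ρ : Equiv.Perm (Fin n)) : Function.Injective (pv n ρ) := by
  intro i j hij
  unfold pv at hij
  split_ifs at hij with hi hj hj
  · have := ρ.injective (Fin.ext hij)
    exact congrArg Fin.val this
  · have := (ρ ⟨i, hi⟩).isLt; omega
  · have := (ρ ⟨j, hj⟩).isLt; omega
  · omega

def sfun (b : Finset ℕ) (i : ℕ) : ℕ :=
  if i / 6 ∈ b then 6 * (i / 6) + (i % 6 + 3) % 6 else i

lemma sfun_invol (b : Finset ℕ) : Function.Involutive (sfun b) := by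
  intro i
  unfold sfun
  by_cases h : i / 6 ∈ b
  · rw [if_pos h]
    have h6 : (6 * (i / 6) + (i % 6 + 3) % 6) / 6 = i / 6 := by omega
    rw [h6, if_pos h]
    omega
  · rw [if_neg h, if_neg h]

lemma sfun_lt {n : ℕ} {b : Finset ℕ} (hb : b ⊆ Finset.range (n / 6)) {i : ℕ} (h : i < n) :
    sfun b i < n := by
  unfold sfun
  split_ifs with h'
  · have := Finset.mem_range.mp (hb h')
    omega
  · exact h

def sperm (n : ℕ) (b : Finset ℕ) (hb : b ⊆ Finset.range (n / 6)) : Equiv.Perm (Fin n) :=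
  Function.Involutive.toPerm (fun j => ⟨sfun b j.val, sfun_lt hb j.isLt⟩)
    (fun j => Fin.ext (sfun_invol b j.val))

lemma sperm_apply {n : ℕ} {b : Finset ℕ} (hb : b ⊆ Finset.range (n / 6)) (j : Fin n) :
    sperm n b hb j = ⟨sfun b j.val, sfun_lt hb j.isLt⟩ := rfl

lemma sperm_invol {n : ℕ} {b : Finset ℕ} (hb : b ⊆ Finset.range (n / 6))
    (ρ : Equiv.Perm (Fin n)) : (sperm n b hb).trans ((sperm n b hb).trans ρ) = ρ := by
  apply Equiv.ext
  intro v
  simp only [Equiv.trans_apply, sperm_apply]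
  congr 1
  exact Fin.ext (sfun_invol b v.val)

lemma pv_trans_sperm {n : ℕ} {b : Finset ℕ} (hb : b ⊆ Finset.range (n / 6))
    (ρ : Equiv.Perm (Fin n)) {i : ℕ} (h : i < n) :
    pv n ((sperm n b hb).trans ρ) i = pv n ρ (sfun b i) := by
  rw [pv_lt _ h, pv_lt _ (sfun_lt hb h)]
  rfl


def Ek (n : ℕ) (ρ : Equiv.Perm (Fin n)) (k : ℕ) : Prop :=
  D6 (pv n ρ (6*k)) (pv n ρ (6*k+1)) (pv n ρ (6*k+2)) (pv n ρ (6*k+3))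
     (pv n ρ (6*k+4)) (pv n ρ (6*k+5))

instance (n ρ k) : Decidable (Ek n ρ k) := by unfold Ek; infer_instance

def KS (n : ℕ) (ρ : Equiv.Perm (Fin n)) : Finset ℕ :=
  (Finset.range (n / 6)).filter (Ek n ρ)

lemma sfun_block_mem {b : Finset ℕ} {k r : ℕ} (hr : r < 6) (hk : k ∈ b) :
    sfun b (6 * k + r) = 6 * k + (r + 3) % 6 := by
  unfold sfun
  have h1 : (6 * k + r) / 6 = k := by omega
  rw [h1, if_pos hk]
  omega

lemma sfun_block_not_mem {b : Finset ℕ} {k r : ℕ} (hr : r < 6) (hk : k ∉ b) :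
    sfun b (6 * k + r) = 6 * k + r := by
  unfold sfun
  have h1 : (6 * k + r) / 6 = k := by omega
  rw [h1, if_neg hk]

lemma Ek_trans_sperm_mem {n : ℕ} {b : Finset ℕ} (hb : b ⊆ Finset.range (n / 6))
    (ρ : Equiv.Perm (Fin n)) {k : ℕ} (hk : k ∈ b) :
    Ek n ((sperm n b hb).trans ρ) k ↔ ¬ Ek n ρ k := by
  have hkm := Finset.mem_range.mp (hb hk)
  have hn : 6 * k + 5 < n := by omega
  unfold Ek
  have e : ∀ r : ℕ, r < 6 →
      pv n ((sperm n b hb).trans ρ) (6*k+r) = pv n ρ (6*k + (r+3) % 6) := by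
    intro r hr
    rw [pv_trans_sperm hb ρ (by omega), sfun_block_mem hr hk]
  rw [show 6*k = 6*k+0 by ring, e 0 (by norm_num), e 1 (by norm_num), e 2 (by norm_num),
    e 3 (by norm_num), e 4 (by norm_num), e 5 (by norm_num)]
  norm_num
  have inj := pv_inj ρ
  exact flip6 (inj.ne (by omega)) (inj.ne (by omega)) (inj.ne (by omega)) (inj.ne (by omega))
    (inj.ne (by omega)) (inj.ne (by omega)) (inj.ne (by omega)) (inj.ne (by omega))
    (inj.ne (by omega)) (inj.ne (by omega)) (inj.ne (by omega)) (inj.ne (by omega))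
    (inj.ne (by omega)) (inj.ne (by omega)) (inj.ne (by omega))

lemma Ek_trans_sperm_not_mem {n : ℕ} {b : Finset ℕ} (hb : b ⊆ Finset.range (n / 6))
    (ρ : Equiv.Perm (Fin n)) {k : ℕ} (hkm : k < n / 6) (hk : k ∉ b) :
    Ek n ((sperm n b hb).trans ρ) k ↔ Ek n ρ k := by
  have hn : 6 * k + 5 < n := by omega
  unfold Ek
  have e : ∀ r : ℕ, r < 6 →
      pv n ((sperm n b hb).trans ρ) (6*k+r) = pv n ρ (6*k + r) := by
    intro r hr
    rw [pv_trans_sperm hb ρ (by omega), sfun_block_not_mem hr hk]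
  rw [show 6*k = 6*k+0 by ring, e 0 (by norm_num), e 1 (by norm_num), e 2 (by norm_num),
    e 3 (by norm_num), e 4 (by norm_num), e 5 (by norm_num)]

lemma KS_trans_sperm {n : ℕ} {b : Finset ℕ} (hb : b ⊆ Finset.range (n / 6))
    (ρ : Equiv.Perm (Fin n)) : KS n ((sperm n b hb).trans ρ) = symmDiff (KS n ρ) b := by
  ext k
  simp only [KS, Finset.mem_filter, Finset.mem_range, Finset.mem_symmDiff]
  by_cases hk : k ∈ b
  · have hkm := Finset.mem_range.mp (hb hk)
    rw [Ek_trans_sperm_mem hb ρ hk]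
    tauto
  · constructor
    · rintro ⟨hkm, hE⟩
      exact Or.inl ⟨⟨hkm, (Ek_trans_sperm_not_mem hb ρ hkm hk).mp hE⟩, hk⟩
    · rintro (⟨⟨hkm, hE⟩, -⟩ | ⟨hkb, -⟩)
      · exact ⟨hkm, (Ek_trans_sperm_not_mem hb ρ hkm hk).mpr hE⟩
      · exact absurd hkb hk

def cpos (n : ℕ) (ρ : Equiv.Perm (Fin n)) (k : ℕ) : ℕ :=
  6*k + (if pv n ρ (6*k) < pv n ρ (6*k+2) ∧ pv n ρ (6*k+3) < pv n ρ (6*k+1) then 2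
    else if pv n ρ (6*k+1) < pv n ρ (6*k+3) ∧ pv n ρ (6*k+4) < pv n ρ (6*k+2) then 3 else 4)

lemma cpos_bounds (n : ℕ) (ρ : Equiv.Perm (Fin n)) (k : ℕ) :
    6*k+2 ≤ cpos n ρ k ∧ cpos n ρ k ≤ 6*k+4 := by
  unfold cpos; split_ifs <;> omega

def gfun (n : ℕ) (ρ : Equiv.Perm (Fin n)) (v : Fin n) : ℕ :=
  ((Finset.range (n/6)).filter (fun k => Ek n ρ k ∧ cpos n ρ k ≤ v.val)).card

section PartA

variable {n : ℕ} (f : Equiv.Perm (Fin n) → Fin n → Fin n)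
  (hf : ∀ (ρ : Equiv.Perm (Fin n)) (v : Fin n),
    (SimpleGraph.pathGraph n).Adj v (f ρ v) ∧
      ∀ u : Fin n, (SimpleGraph.pathGraph n).Adj v u → ρ (f ρ v) ≤ ρ u)
  (ρ : Equiv.Perm (Fin n))

include hf

lemma no_cross {k : ℕ} (hk : k < n/6) (hE : Ek n ρ k) {u w : Fin n}
    (huw : u.val + 1 = w.val) (hcpos : w.val = cpos n ρ k)
    (hedge : f ρ u = w ∨ f ρ w = u) : False := by
  have hn : 6*k+5 < n := by omega
  have hval : ∀ (v : Fin n) (i : ℕ) (h : i < n), v.val = i → (ρ v).val = pv n ρ i := by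
    intro v i h hv
    rw [pv_lt _ h]
    congr 2
    exact Fin.ext hv
  have hmin : ∀ (v x : Fin n), (SimpleGraph.pathGraph n).Adj v x →
      (ρ (f ρ v)).val ≤ (ρ x).val := fun v x h => (hf ρ v).2 x h
  unfold cpos at hcpos
  split_ifs at hcpos with hc1 hc2
  · -- cut between 6k+1 and 6k+2
    have hu : u.val = 6*k+1 := by omega
    have hw : w.val = 6*k+2 := by omega
    rcases hedge with h | h
    · have h3 := hmin u ⟨6*k, by omega⟩ (SimpleGraph.pathGraph_adj.mpr (Or.inr (by simp; omega)))
      rw [h, hval w _ (by omega) hw, hval ⟨6*k, by omega⟩ (6*k) (by omega) rfl] at h3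
      omega
    · have h3 := hmin w ⟨6*k+3, by omega⟩ (SimpleGraph.pathGraph_adj.mpr (Or.inl (by simp; omega)))
      rw [h, hval u _ (by omega) hu, hval ⟨6*k+3, by omega⟩ (6*k+3) (by omega) rfl] at h3
      omega
  · -- cut between 6k+2 and 6k+3
    have hu : u.val = 6*k+2 := by omega
    have hw : w.val = 6*k+3 := by omega
    rcases hedge with h | h
    · have h3 := hmin u ⟨6*k+1, by omega⟩ (SimpleGraph.pathGraph_adj.mpr (Or.inr (by simp; omega)))
      rw [h, hval w _ (by omega) hw, hval ⟨6*k+1, by omega⟩ (6*k+1) (by omega) rfl] at h3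
      omega
    · have h3 := hmin w ⟨6*k+4, by omega⟩ (SimpleGraph.pathGraph_adj.mpr (Or.inl (by simp; omega)))
      rw [h, hval u _ (by omega) hu, hval ⟨6*k+4, by omega⟩ (6*k+4) (by omega) rfl] at h3
      omega
  · -- cut between 6k+3 and 6k+4; third disjunct of U6 holds
    have hc3 : pv n ρ (6*k+2) < pv n ρ (6*k+4) ∧ pv n ρ (6*k+5) < pv n ρ (6*k+3) := by
      have := hE.1
      unfold U6 at this
      tauto
    have hu : u.val = 6*k+3 := by omega
    have hw : w.val = 6*k+4 := by omega
    rcases hedge with h | h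
    · have h3 := hmin u ⟨6*k+2, by omega⟩ (SimpleGraph.pathGraph_adj.mpr (Or.inr (by simp; omega)))
      rw [h, hval w _ (by omega) hw, hval ⟨6*k+2, by omega⟩ (6*k+2) (by omega) rfl] at h3
      omega
    · have h3 := hmin w ⟨6*k+5, by omega⟩ (SimpleGraph.pathGraph_adj.mpr (Or.inl (by simp; omega)))
      rw [h, hval u _ (by omega) hu, hval ⟨6*k+5, by omega⟩ (6*k+5) (by omega) rfl] at h3
      omega

lemma gfun_step {u w : Fin n} (huw : u.val + 1 = w.val)
    (hedge : f ρ u = w ∨ f ρ w = u) : gfun n ρ u = gfun n ρ w := by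
  unfold gfun
  congr 1
  apply Finset.filter_congr
  intro k hk
  have hkm := Finset.mem_range.mp hk
  constructor
  · rintro ⟨hE, hle⟩
    exact ⟨hE, by omega⟩
  · rintro ⟨hE, hle⟩
    refine ⟨hE, ?_⟩
    have hne : cpos n ρ k ≠ w.val := fun hcp => no_cross f hf ρ hkm hE huw hcp.symm hedge
    omega

lemma gfun_adj {u w : Fin n}
    (hadj : (SimpleGraph.fromRel fun u w => f ρ u = w).Adj u w) :
    gfun n ρ u = gfun n ρ w := by
  rw [SimpleGraph.fromRel_adj] at hadj
  obtain ⟨hne, hor⟩ := hadj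
  have hpadj : (SimpleGraph.pathGraph n).Adj u w := by
    rcases hor with h | h
    · have := (hf ρ u).1; rwa [h] at this
    · have := (hf ρ w).1; rw [h] at this; exact this.symm
  rw [SimpleGraph.pathGraph_adj] at hpadj
  rcases hpadj with h | h
  · exact gfun_step f hf ρ h hor
  · exact (gfun_step f hf ρ h (hor.symm)).symm

lemma partA (hK : n/26 + 1 ≤ (KS n ρ).card) :
    (n : ℝ)/26 ≤
      (Nat.card (SimpleGraph.fromRel fun u w => f ρ u = w).ConnectedComponent : ℝ) := by
  set H := SimpleGraph.fromRel fun u w => f ρ u = w with hH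
  have hgw : ∀ v w : Fin n, H.Walk v w → gfun n ρ v = gfun n ρ w := by
    intro v w p
    induction p with
    | nil => rfl
    | cons h q ih => exact (gfun_adj f hf ρ h).trans ih
  let Gb : H.ConnectedComponent → ℕ :=
    SimpleGraph.ConnectedComponent.lift (gfun n ρ) (fun v w p _ => hgw v w p)
  have hvert : ∀ k, k ∈ KS n ρ → cpos n ρ k < n := by
    intro k hkK
    have hkm := Finset.mem_range.mp (Finset.mem_of_mem_filter k hkK)
    have := (cpos_bounds n ρ k).2
    omega
  have key : ∀ k, (hkK : k ∈ KS n ρ) → gfun n ρ ⟨cpos n ρ k, hvert k hkK⟩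
      = ((KS n ρ).filter (fun j => j ≤ k)).card := by
    intro k hkK
    unfold gfun KS
    rw [Finset.filter_filter]
    congr 1
    apply Finset.filter_congr
    intro j hj
    simp only [Fin.val_mk]
    have hb1 := cpos_bounds n ρ j
    have hb2 := cpos_bounds n ρ k
    by_cases hjk : j = k
    · subst hjk; simp
    · constructor
      · rintro ⟨hE, hle⟩; exact ⟨hE, by omega⟩
      · rintro ⟨hE, hle⟩; exact ⟨hE, by omega⟩
  have hinj : ∀ k₁, k₁ ∈ KS n ρ → ∀ k₂, (hk2 : k₂ ∈ KS n ρ) →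
      ∀ (h1 : cpos n ρ k₁ < n) (h2 : cpos n ρ k₂ < n),
      H.connectedComponentMk ⟨cpos n ρ k₁, h1⟩ = H.connectedComponentMk ⟨cpos n ρ k₂, h2⟩ →
      k₁ = k₂ := by
    intro k₁ hk1 k₂ hk2 h1 h2 hcc
    have hg := congrArg Gb hcc
    simp only [Gb, SimpleGraph.ConnectedComponent.lift_mk] at hg
    rw [key k₁ hk1, key k₂ hk2] at hg
    by_contra hne
    have main : ∀ a b : ℕ, a ∈ KS n ρ → b ∈ KS n ρ → a < b →
        ((KS n ρ).filter (fun j => j ≤ a)).card < ((KS n ρ).filter (fun j => j ≤ b)).card := by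
      intro a b haK hbK hab
      apply Finset.card_lt_card
      constructor
      · intro x hx
        rcases Finset.mem_filter.mp hx with ⟨hxK, hxa⟩
        have hxa' : x ≤ a := hxa
        exact Finset.mem_filter.mpr ⟨hxK, le_trans hxa' (le_of_lt hab)⟩
      · intro hsub
        have hbmem : b ∈ (KS n ρ).filter (fun j => j ≤ b) :=
          Finset.mem_filter.mpr ⟨hbK, le_refl b⟩
        have h2 : b ≤ a := by simpa using (Finset.mem_filter.mp (hsub hbmem)).2
        omega
    rcases lt_or_gt_of_ne hne with h | h
    · exact absurd hg (Nat.ne_of_lt (main k₁ k₂ hk1 hk2 h))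
    · exact absurd hg.symm (Nat.ne_of_lt (main k₂ k₁ hk2 hk1 h))
  haveI : Finite H.ConnectedComponent := Quot.finite _
  let φ : {k // k ∈ KS n ρ} → H.ConnectedComponent :=
    fun k => H.connectedComponentMk ⟨cpos n ρ k.val, hvert k.val k.prop⟩
  have hφ : Function.Injective φ := by
    intro k₁ k₂ h
    exact Subtype.ext (hinj k₁.val k₁.prop k₂.val k₂.prop _ _ h)
  have hcard := Nat.card_le_card_of_injective φ hφ
  rw [Nat.card_eq_fintype_card, Fintype.card_coe] at hcard
  have hnat : n ≤ 26 * Nat.card H.ConnectedComponent := by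
    have : n/26 + 1 ≤ Nat.card H.ConnectedComponent := le_trans hK hcard
    omega
  rw [div_le_iff₀ (by norm_num : (0:ℝ) < 26)]
  calc (n:ℝ) ≤ (26 * Nat.card H.ConnectedComponent : ℕ) := by exact_mod_cast hnat
    _ = (Nat.card H.ConnectedComponent : ℝ) * 26 := by push_cast; ring

end PartA

section PartB

variable {n : ℕ}

lemma fiber_card (b : Finset ℕ) (hb : b ⊆ Finset.range (n/6)) :
    (Finset.univ.filter (fun ρ : Equiv.Perm (Fin n) => KS n ρ = b)).card
      = (Finset.univ.filter (fun ρ : Equiv.Perm (Fin n) => KS n ρ = ∅)).card := by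
  apply Finset.card_bij' (i := fun ρ _ => (sperm n b hb).trans ρ)
    (j := fun ρ _ => (sperm n b hb).trans ρ)
  · intro ρ hρ
    have hKS : KS n ρ = b := (Finset.mem_filter.mp hρ).2
    rw [Finset.mem_filter]
    refine ⟨Finset.mem_univ _, ?_⟩
    rw [KS_trans_sperm hb ρ, hKS, symmDiff_self]
    rfl
  · intro ρ hρ
    have hKS : KS n ρ = ∅ := (Finset.mem_filter.mp hρ).2
    rw [Finset.mem_filter]
    refine ⟨Finset.mem_univ _, ?_⟩
    rw [KS_trans_sperm hb ρ, hKS]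
    show symmDiff ⊥ b = b
    rw [bot_symmDiff]
  · intro ρ _
    exact sperm_invol hb ρ
  · intro ρ _
    exact sperm_invol hb ρ

lemma count_bad :
    (Finset.univ.filter
        (fun ρ : Equiv.Perm (Fin n) => (KS n ρ).card ≤ n/26)).card * 2^(n/6)
      ≤ (∑ s ∈ Finset.range (n/26+1), (n/6).choose s)
          * (Fintype.card (Equiv.Perm (Fin n))) := by
  classical
  set m := n/6
  set T := n/26
  set c₀ := (Finset.univ.filter (fun ρ : Equiv.Perm (Fin n) => KS n ρ = ∅)).card with hc₀
  set pats := ((Finset.range m).powerset).filter (fun b => b.card ≤ T) with hpats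
  -- total count
  have htot : Fintype.card (Equiv.Perm (Fin n)) = 2^m * c₀ := by
    rw [← Finset.card_univ]
    rw [Finset.card_eq_sum_card_fiberwise
      (f := KS n) (t := (Finset.range m).powerset)
      (fun ρ _ => Finset.mem_powerset.mpr (Finset.filter_subset _ _))]
    rw [Finset.sum_congr rfl
      (fun b hbp => fiber_card b (Finset.mem_powerset.mp hbp))]
    rw [Finset.sum_const, Finset.card_powerset, Finset.card_range]
    rfl
  -- bad count
  have hbad : (Finset.univ.filter
      (fun ρ : Equiv.Perm (Fin n) => (KS n ρ).card ≤ T)).card ≤ pats.card * c₀ := by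
    rw [Finset.card_eq_sum_card_fiberwise (f := KS n) (t := pats)
      (fun ρ hρ => Finset.mem_filter.mpr
        ⟨Finset.mem_powerset.mpr (Finset.filter_subset _ _),
          (Finset.mem_filter.mp hρ).2⟩)]
    calc ∑ b ∈ pats, ((Finset.univ.filter
            (fun ρ : Equiv.Perm (Fin n) => (KS n ρ).card ≤ T)).filter
            (fun ρ => KS n ρ = b)).card
        ≤ ∑ b ∈ pats, (Finset.univ.filter (fun ρ : Equiv.Perm (Fin n) => KS n ρ = b)).card := by
          apply Finset.sum_le_sum
          intro b _
          apply Finset.card_le_card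
          intro ρ hρ
          exact Finset.mem_filter.mpr ⟨Finset.mem_univ _, (Finset.mem_filter.mp hρ).2⟩
      _ = ∑ b ∈ pats, c₀ := Finset.sum_congr rfl (fun b hbp =>
          fiber_card b (Finset.mem_powerset.mp (Finset.mem_of_mem_filter b hbp)))
      _ = pats.card * c₀ := by rw [Finset.sum_const]; rfl
  -- pattern count
  have hpc : pats.card = ∑ s ∈ Finset.range (T+1), m.choose s := by
    rw [Finset.card_eq_sum_card_fiberwise (f := Finset.card) (t := Finset.range (T+1))
      (fun b hb => Finset.mem_range.mpr (Nat.lt_succ_of_le (Finset.mem_filter.mp hb).2))]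
    apply Finset.sum_congr rfl
    intro s hs
    have hsT : s ≤ T := Nat.lt_succ_iff.mp (Finset.mem_range.mp hs)
    have he : pats.filter (fun b => b.card = s)
        = (Finset.range m).powerset.filter (fun b => b.card = s) := by
      rw [hpats, Finset.filter_filter]
      apply Finset.filter_congr
      intro b _
      constructor
      · rintro ⟨-, h⟩; exact h
      · intro h; exact ⟨by omega, h⟩
    rw [he, ← Finset.powersetCard_eq_filter, Finset.card_powersetCard, Finset.card_range]
  calc (Finset.univ.filter
        (fun ρ : Equiv.Perm (Fin n) => (KS n ρ).card ≤ T)).card * 2^m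
      ≤ (pats.card * c₀) * 2^m := Nat.mul_le_mul_right _ hbad
    _ = pats.card * (2^m * c₀) := by ring
    _ = (∑ s ∈ Finset.range (T+1), m.choose s) * Fintype.card (Equiv.Perm (Fin n)) := by
        rw [hpc, htot]

end PartB

section Numeric

lemma chernoff (m T : ℕ) (hTm : T ≤ m) :
    ((∑ s ∈ Finset.range (T+1), m.choose s : ℕ) : ℝ) ≤ 4^T * (5/4)^m := by
  push_cast
  have step1 : ∑ s ∈ Finset.range (T+1), (m.choose s : ℝ)
      ≤ ∑ s ∈ Finset.range (T+1), (m.choose s : ℝ) * ((1/4)^s * 4^T) := by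
    apply Finset.sum_le_sum
    intro s hs
    have hsT : s ≤ T := Nat.lt_succ_iff.mp (Finset.mem_range.mp hs)
    have h4 : (4:ℝ)^s ≤ 4^T := pow_le_pow_right₀ (by norm_num) hsT
    have hrw : (1/4:ℝ)^s * 4^T = 4^T / 4^s := by
      rw [one_div, inv_pow, inv_mul_eq_div]
    apply le_mul_of_one_le_right (Nat.cast_nonneg _)
    rw [hrw, le_div_iff₀ (by positivity), one_mul]
    exact h4
  have step2 : ∑ s ∈ Finset.range (T+1), (m.choose s : ℝ) * ((1/4)^s * 4^T)
      ≤ ∑ s ∈ Finset.range (m+1), (m.choose s : ℝ) * ((1/4)^s * 4^T) := by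
    apply Finset.sum_le_sum_of_subset_of_nonneg
    · exact Finset.range_subset_range.mpr (by omega)
    · intro s _ _
      positivity
  have step3 : ∑ s ∈ Finset.range (m+1), (m.choose s : ℝ) * ((1/4)^s * 4^T)
      = 4^T * ((1/4 : ℝ) + 1)^m := by
    rw [add_pow, Finset.mul_sum]
    apply Finset.sum_congr rfl
    intro s _
    rw [one_pow]
    ring
  calc ∑ s ∈ Finset.range (T+1), (m.choose s : ℝ)
      ≤ ∑ s ∈ Finset.range (m+1), (m.choose s : ℝ) * ((1/4)^s * 4^T) := le_trans step1 step2
    _ = 4^T * ((1/4 : ℝ) + 1)^m := step3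
    _ = 4^T * (5/4)^m := by norm_num

end Numeric

lemma numeric {n : ℕ} (hn : 1000 ≤ n) :
    (4:ℝ)^(n/26) * (5/4)^(n/6) / 2^(n/6) ≤ Real.exp (-(1/100) * n) := by
  set T := n/26 with hT
  set m := n/6 with hm
  have h26 : 26 * T ≤ n := by omega
  have h6 : n ≤ 6 * m + 5 := by omega
  -- exp bound
  have hexp1 : Real.exp (1/100) ≤ 100/99 := by
    have h1 := Real.add_one_le_exp (-(1/100 : ℝ))
    have h2 : (99/100 : ℝ) ≤ Real.exp (-(1/100)) := by linarith
    calc Real.exp (1/100) = (Real.exp (-(1/100)))⁻¹ := by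
          rw [← Real.exp_neg]; norm_num
      _ ≤ ((99/100 : ℝ))⁻¹ := by
          apply inv_anti₀ (by norm_num) h2
      _ = 100/99 := by norm_num
  -- main rational inequality
  have hmain : (4:ℝ)^T * (100/99)^n ≤ (8/5)^m := by
    apply le_of_pow_le_pow_left₀ (n := 78) (by norm_num) (by positivity)
    rw [mul_pow, ← pow_mul, ← pow_mul, ← pow_mul]
    have e1 : (4:ℝ)^(T*78) ≤ 4^(3*n) := pow_le_pow_right₀ (by norm_num) (by omega)
    have hs : (4:ℝ)^(3*n) * (100/99)^(n*78) * (8/5)^65 ≤ (8/5)^(13*n) := by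
      have hk : (4:ℝ)^3 * (100/99)^78 * 2 ≤ (8/5)^13 := by norm_num
      have h2n : (8/5:ℝ)^65 ≤ 2^n := by
        calc (8/5:ℝ)^65 ≤ 2^65 := by
              apply pow_le_pow_left₀ (by norm_num) (by norm_num)
          _ ≤ 2^n := pow_le_pow_right₀ (by norm_num) (by omega)
      calc (4:ℝ)^(3*n) * (100/99)^(n*78) * (8/5)^65
          = ((4:ℝ)^3)^n * ((100/99 : ℝ)^78)^n * (8/5)^65 := by
            rw [← pow_mul, ← pow_mul]
            ring_nf
        _ = ((4:ℝ)^3 * (100/99)^78)^n * (8/5)^65 := by rw [mul_pow]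
        _ ≤ ((4:ℝ)^3 * (100/99)^78)^n * 2^n := by
            apply mul_le_mul_of_nonneg_left h2n (by positivity)
        _ = ((4:ℝ)^3 * (100/99)^78 * 2)^n := by
            have : ((4:ℝ)^3 * (100/99)^78 * 2)^n = ((4:ℝ)^3 * (100/99)^78)^n * 2^n := mul_pow _ _ n
            rw [this, mul_pow]
        _ ≤ ((8/5 : ℝ)^13)^n := pow_le_pow_left₀ (by positivity) hk n
        _ = (8/5 : ℝ)^(13*n) := by rw [← pow_mul]
    have h13 : (8/5:ℝ)^(13*n) ≤ (8/5)^(m*78) * (8/5)^65 := by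
      rw [← pow_add]
      exact pow_le_pow_right₀ (by norm_num) (by omega)
    have hstep : (4:ℝ)^(T*78) * (100/99)^(n*78) * (8/5)^65
        ≤ (8/5)^(m*78) * (8/5)^65 := by
      calc (4:ℝ)^(T*78) * (100/99)^(n*78) * (8/5)^65
          ≤ (4:ℝ)^(3*n) * (100/99)^(n*78) * (8/5)^65 := by
            apply mul_le_mul_of_nonneg_right _ (by positivity)
            exact mul_le_mul_of_nonneg_right e1 (by positivity)
        _ ≤ (8/5:ℝ)^(13*n) := hs
        _ ≤ (8/5)^(m*78) * (8/5)^65 := h13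
    exact le_of_mul_le_mul_right hstep (by positivity)
  -- put it together
  have hL : (4:ℝ)^T * (5/4)^m / 2^m = 4^T * (5/8)^m := by
    rw [mul_div_assoc, ← div_pow]
    norm_num
  have hEn : Real.exp (-(1/100) * (n:ℝ)) = ((Real.exp (1/100))^n)⁻¹ := by
    rw [show (-(1/100) * (n:ℝ)) = (n:ℕ) * (-(1/100) : ℝ) by push_cast; ring,
      Real.exp_nat_mul, Real.exp_neg, inv_pow]
  rw [hL, hEn]
  calc (4:ℝ)^T * (5/8)^m = 4^T / (8/5)^m := by
        rw [show (5/8 : ℝ) = ((8/5 : ℝ))⁻¹ by norm_num, inv_pow]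
        ring
    _ ≤ (4:ℝ)^T / (4^T * (100/99)^n) := by
        apply div_le_div_of_nonneg_left (by positivity) (by positivity) hmain
    _ = ((100/99 : ℝ)^n)⁻¹ := by
        rw [div_eq_mul_inv, mul_inv]
        have h4 : (4:ℝ)^T ≠ 0 := by positivity
        field_simp
    _ ≤ ((Real.exp (1/100))^n)⁻¹ := by
        apply inv_anti₀ (by positivity)
        exact pow_le_pow_left₀ (Real.exp_nonneg _) hexp1 n

end Stmt14aux

/-- There are `c > 0` and `n₀` such that for all `n ≥ n₀` the
following holds.  Let `P_n` be the path graph on `n` vertices and, for a bijection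
`ρ` of the vertex set (a uniformly random priority assignment), let `f ρ v` be the
neighbor of `v` minimizing `ρ`.  Then with probability at least `1 − e^{−c·n}` the
undirected functional graph `H` of `f ρ` (edge set `{{v, f ρ v}}`) has at least `n/26`
connected components (hence TreeContraction needs `Ω(log n)` phases on a path w.h.p.). -/
theorem stmt14 :
    ∃ c : ℝ, 0 < c ∧ ∃ n₀ : ℕ, ∀ n : ℕ, n₀ ≤ n →
      ∀ f : Equiv.Perm (Fin n) → Fin n → Fin n,
        (∀ (ρ : Equiv.Perm (Fin n)) (v : Fin n),
          (pathGraph n).Adj v (f ρ v) ∧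
            ∀ u : Fin n, (pathGraph n).Adj v u → ρ (f ρ v) ≤ ρ u) →
        1 - Real.exp (-c * n) ≤
          (Nat.card {ρ : Equiv.Perm (Fin n) //
              (n : ℝ) / 26 ≤
                (Nat.card (SimpleGraph.fromRel
                  fun u w => f ρ u = w).ConnectedComponent : ℝ)} : ℝ) /
            (Fintype.card (Equiv.Perm (Fin n)) : ℝ) := by
    classical
  refine ⟨1/100, by norm_num, 1000, fun n hn f hf => ?_⟩
  have hTm : n/26 ≤ n/6 := by omega
  set Bad := Finset.univ.filter
    (fun ρ : Equiv.Perm (Fin n) => (Stmt14aux.KS n ρ).card ≤ n/26) with hBad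
  have hN0 : (0:ℝ) < (Fintype.card (Equiv.Perm (Fin n)) : ℝ) := by
    exact_mod_cast Fintype.card_pos
  have hcount := Stmt14aux.count_bad (n := n)
  have hch := Stmt14aux.chernoff (n/6) (n/26) hTm
  have hnum := Stmt14aux.numeric hn
  have h2m : (0:ℝ) < 2^(n/6) := by positivity
  have hBR : (Bad.card : ℝ)
      ≤ Real.exp (-(1/100) * n) * (Fintype.card (Equiv.Perm (Fin n)) : ℝ) := by
    have hc1 : ((Bad.card * 2^(n/6) : ℕ) : ℝ)
        ≤ (((∑ s ∈ Finset.range (n/26+1), (n/6).choose s)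
            * (Fintype.card (Equiv.Perm (Fin n))) : ℕ) : ℝ) := Nat.cast_le.mpr hcount
    push_cast at hc1
    have hc2 : (Bad.card : ℝ) * 2^(n/6)
        ≤ (4^(n/26) * (5/4)^(n/6)) * (Fintype.card (Equiv.Perm (Fin n)) : ℝ) := by
      calc (Bad.card : ℝ) * 2^(n/6)
          ≤ (∑ s ∈ Finset.range (n/26+1), ((n/6).choose s : ℝ))
            * (Fintype.card (Equiv.Perm (Fin n)) : ℝ) := hc1
        _ ≤ (4^(n/26) * (5/4)^(n/6)) * (Fintype.card (Equiv.Perm (Fin n)) : ℝ) := by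
            apply mul_le_mul_of_nonneg_right _ (Nat.cast_nonneg _)
            exact_mod_cast hch
    rw [← le_div_iff₀ h2m] at hc2
    calc (Bad.card : ℝ)
        ≤ 4^(n/26) * (5/4)^(n/6) * (Fintype.card (Equiv.Perm (Fin n)) : ℝ) / 2^(n/6) := hc2
      _ = (4^(n/26) * (5/4)^(n/6) / 2^(n/6)) * (Fintype.card (Equiv.Perm (Fin n)) : ℝ) := by
          ring
      _ ≤ Real.exp (-(1/100) * n) * (Fintype.card (Equiv.Perm (Fin n)) : ℝ) :=
          mul_le_mul_of_nonneg_right hnum (Nat.cast_nonneg _)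
  have hgood : (Finset.univ \ Bad) ⊆ Finset.univ.filter
      (fun ρ : Equiv.Perm (Fin n) => (n : ℝ) / 26 ≤
        (Nat.card (SimpleGraph.fromRel
          fun u w => f ρ u = w).ConnectedComponent : ℝ)) := by
    intro ρ hρ
    rw [Finset.mem_sdiff] at hρ
    have hb : ¬ ((Stmt14aux.KS n ρ).card ≤ n/26) := fun h =>
      hρ.2 (Finset.mem_filter.mpr ⟨Finset.mem_univ _, h⟩)
    exact Finset.mem_filter.mpr ⟨Finset.mem_univ _, Stmt14aux.partA f hf ρ (by omega)⟩
  have hNatcard : (Nat.card {ρ : Equiv.Perm (Fin n) //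
      (n : ℝ) / 26 ≤ (Nat.card (SimpleGraph.fromRel
        fun u w => f ρ u = w).ConnectedComponent : ℝ)})
      = (Finset.univ.filter
        (fun ρ : Equiv.Perm (Fin n) => (n : ℝ) / 26 ≤
          (Nat.card (SimpleGraph.fromRel
            fun u w => f ρ u = w).ConnectedComponent : ℝ))).card := by
    rw [Nat.card_eq_fintype_card, Fintype.card_subtype]
  rw [hNatcard, le_div_iff₀ hN0]
  have hBN : Bad.card ≤ Fintype.card (Equiv.Perm (Fin n)) := by
    rw [← Finset.card_univ]
    exact Finset.card_le_card (Finset.filter_subset _ _)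
  have hcard1 : Fintype.card (Equiv.Perm (Fin n)) - Bad.card
      ≤ (Finset.univ.filter
        (fun ρ : Equiv.Perm (Fin n) => (n : ℝ) / 26 ≤
          (Nat.card (SimpleGraph.fromRel
            fun u w => f ρ u = w).ConnectedComponent : ℝ))).card := by
    calc Fintype.card (Equiv.Perm (Fin n)) - Bad.card = (Finset.univ \ Bad).card := by
          rw [Finset.card_sdiff_of_subset (Finset.filter_subset _ _), Finset.card_univ]
      _ ≤ _ := Finset.card_le_card hgood
  have hcast : ((Fintype.card (Equiv.Perm (Fin n)) - Bad.card : ℕ) : ℝ)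
      = (Fintype.card (Equiv.Perm (Fin n)) : ℝ) - (Bad.card : ℝ) := by
    exact Nat.cast_sub hBN
  have hfin := Nat.cast_le (α := ℝ).mpr hcard1
  rw [hcast] at hfin
  have hexpeq : (-(1:ℝ)/100 * n) = (-(1/100) * n) := by ring
  nlinarith [hBR, hfin, hN0]
end
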